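/- arXiv:2006.03538 — 3 statements merged into one kernel-verified Lean document; each statement's English description precedes it below -/
import Mathlib

section
/- Let u, v be linearly independent unit vectors in ℝ² and let f = (f₁, f₂) be a vector field on ℝ² with f₁, f₂ ∈ C²_c(ℝ²). If L f(x) = 0 and I f(x) = 0 for all x ∈ ℝ², then f = 0 identically. That is, a compactly supported C² vector field is uniquely determined by its longitudinal V-line transform together with its first moment longitudinal V-line transform. -/
open MeasureTheory Matrix

noncomputable section

/-- Dot product on ℝ². -/
def dot2 (u v : ℝ × ℝ) : ℝ := u.1 * v.1 + u.2 * v.2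

/-- `x^⊥ = (-x₂, x₁)`. -/
def perp2 (x : ℝ × ℝ) : ℝ × ℝ := (-x.2, x.1)

/-- Divergent beam transform `X_u h (x) = ∫₀^∞ h(x + t u) dt`. -/
def Xbeam (u : ℝ × ℝ) (h : ℝ × ℝ → ℝ) (x : ℝ × ℝ) : ℝ :=
  ∫ t in Set.Ioi (0 : ℝ), h (x + t • u)

/-- First moment divergent beam transform `X¹_u h (x) = ∫₀^∞ t h(x + t u) dt`. -/
def Xmom (u : ℝ × ℝ) (h : ℝ × ℝ → ℝ) (x : ℝ × ℝ) : ℝ :=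
  ∫ t in Set.Ioi (0 : ℝ), t * h (x + t • u)

/-- Directional derivative `D_u h = u · ∇ h`. -/
def Ddir (u : ℝ × ℝ) (h : ℝ × ℝ → ℝ) (x : ℝ × ℝ) : ℝ := fderiv ℝ h x u

/-- Twice continuously differentiable, compactly supported. -/
def IsC2c (h : ℝ × ℝ → ℝ) : Prop := ContDiff ℝ 2 h ∧ HasCompactSupport h

/-- `div f = ∂f₁/∂x₁ + ∂f₂/∂x₂`. -/
def divf (f₁ f₂ : ℝ × ℝ → ℝ) (x : ℝ × ℝ) : ℝ :=
  fderiv ℝ f₁ x (1, 0) + fderiv ℝ f₂ x (0, 1)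

/-- `curl f = ∂f₂/∂x₁ - ∂f₁/∂x₂`. -/
def curlf (f₁ f₂ : ℝ × ℝ → ℝ) (x : ℝ × ℝ) : ℝ :=
  fderiv ℝ f₂ x (1, 0) - fderiv ℝ f₁ x (0, 1)

/-- Longitudinal V-line transform `L f = -X_u (f·u) + X_v (f·v)`. -/
def VlineL (u v : ℝ × ℝ) (f₁ f₂ : ℝ × ℝ → ℝ) (x : ℝ × ℝ) : ℝ :=
  - Xbeam u (fun y => f₁ y * u.1 + f₂ y * u.2) x
  + Xbeam v (fun y => f₁ y * v.1 + f₂ y * v.2) x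

/-- Transverse V-line transform `T f = -X_u (f·u^⊥) + X_v (f·v^⊥)`. -/
def VlineT (u v : ℝ × ℝ) (f₁ f₂ : ℝ × ℝ → ℝ) (x : ℝ × ℝ) : ℝ :=
  - Xbeam u (fun y => f₁ y * (perp2 u).1 + f₂ y * (perp2 u).2) x
  + Xbeam v (fun y => f₁ y * (perp2 v).1 + f₂ y * (perp2 v).2) x

/-- First moment longitudinal V-line transform `I f = -X¹_u (f·u) + X¹_v (f·v)`. -/
def VmomL (u v : ℝ × ℝ) (f₁ f₂ : ℝ × ℝ → ℝ) (x : ℝ × ℝ) : ℝ :=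
  - Xmom u (fun y => f₁ y * u.1 + f₂ y * u.2) x
  + Xmom v (fun y => f₁ y * v.1 + f₂ y * v.2) x

/-- First moment transverse V-line transform `J f = -X¹_u (f·u^⊥) + X¹_v (f·v^⊥)`. -/
def VmomT (u v : ℝ × ℝ) (f₁ f₂ : ℝ × ℝ → ℝ) (x : ℝ × ℝ) : ℝ :=
  - Xmom u (fun y => f₁ y * (perp2 u).1 + f₂ y * (perp2 u).2) x
  + Xmom v (fun y => f₁ y * (perp2 v).1 + f₂ y * (perp2 v).2) x

/-- Radon transform `R h (ψ, s) = ∫_ℝ h (s ψ + t ψ^⊥) dt`. -/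
def Radon2 (h : ℝ × ℝ → ℝ) (ψ : ℝ × ℝ) (s : ℝ) : ℝ :=
  ∫ t : ℝ, h (s • ψ + t • perp2 ψ)

/-- The (vector-valued) star transform. -/
def starS (m : ℕ) (γ : Fin m → ℝ × ℝ) (c : Fin m → ℝ)
    (f₁ f₂ : ℝ × ℝ → ℝ) (x : ℝ × ℝ) : ℝ × ℝ :=
  ∑ i, c i •
    (Xbeam (γ i) (fun y => f₁ y * (γ i).1 + f₂ y * (γ i).2) x,
     Xbeam (γ i) (fun y => f₁ y * (perp2 (γ i)).1 + f₂ y * (perp2 (γ i)).2) x)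

/-- `γ(ψ) = -∑ cᵢ γᵢ / (ψ·γᵢ)`. -/
def starGamma (m : ℕ) (γ : Fin m → ℝ × ℝ) (c : Fin m → ℝ) (ψ : ℝ × ℝ) : ℝ × ℝ :=
  - ∑ i, (c i / dot2 ψ (γ i)) • γ i

/-- A star configuration is symmetric if `m = 2k` and, after re-indexing by a
permutation, `γᵢ = -γ_{k+i}` and `cᵢ = -c_{k+i}` for `i = 1, …, k`. -/
def StarSymmetric (m : ℕ) (γ : Fin m → ℝ × ℝ) (c : Fin m → ℝ) : Prop :=
  ∃ k : ℕ, ∃ hk : m = 2 * k, ∃ σ : Equiv.Perm (Fin m),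
    ∀ i : Fin m, ∀ hi : (i : ℕ) < k,
      γ (σ i) = - γ (σ ⟨(i : ℕ) + k, by omega⟩) ∧
      c (σ i) = - c (σ ⟨(i : ℕ) + k, by omega⟩)



lemma unit_norm_half (u : ℝ × ℝ) (hu : u.1 ^ 2 + u.2 ^ 2 = 1) : (1:ℝ)/2 ≤ ‖u‖ := by
  have h1 : |u.1| ≤ ‖u‖ := norm_fst_le u
  have h2 : |u.2| ≤ ‖u‖ := norm_snd_le u
  nlinarith [norm_nonneg u, abs_nonneg u.1, abs_nonneg u.2, sq_abs u.1, sq_abs u.2]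

lemma exists_radius (g : ℝ × ℝ → ℝ) (hc : HasCompactSupport g) :
    ∃ R > 0, ∀ y : ℝ × ℝ, R ≤ ‖y‖ → g y = 0 ∧ fderiv ℝ g y = 0 := by
  obtain ⟨r, hr⟩ := hc.isBounded.subset_closedBall 0
  refine ⟨max r 0 + 1, by positivity, fun y hy => ?_⟩
  have hy' : y ∉ tsupport g := by
    intro h
    have h2 := hr h
    simp only [Metric.mem_closedBall, dist_zero_right] at h2
    have h3 : r ≤ max r 0 := le_max_left _ _
    linarith
  refine ⟨image_eq_zero_of_notMem_tsupport hy', ?_⟩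
  by_contra h
  exact hy' (support_fderiv_subset ℝ h)

lemma line_out {u : ℝ × ℝ} (hu : (1:ℝ)/2 ≤ ‖u‖) (R : ℝ) (y : ℝ × ℝ) (t : ℝ)
    (ht : 2*(R + ‖y‖) ≤ |t|) : R ≤ ‖y + t • u‖ := by
  have h1 : ‖t • u‖ - ‖y‖ ≤ ‖y + t • u‖ := by
    have := norm_add_le (y + t • u) (-y)
    simp at this
    linarith [norm_neg y ▸ this]
  have h2 : ‖t • u‖ = |t| * ‖u‖ := by rw [norm_smul, Real.norm_eq_abs]
  nlinarith [norm_nonneg y, abs_nonneg t]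

lemma cont_line {g : ℝ × ℝ → ℝ} (hg : Continuous g) (u y : ℝ × ℝ) :
    Continuous (fun t : ℝ => g (y + t • u)) :=
  hg.comp (continuous_const.add (continuous_id.smul continuous_const))

lemma integral_Ioi_eq_intervalIntegral (φ : ℝ → ℝ) (hφ : Continuous φ)
    (hcs : HasCompactSupport φ) {s T : ℝ} (hT : ∀ t, T ≤ t → φ t = 0) (hsT : s ≤ T) :
    ∫ t in Set.Ioi s, φ t = ∫ t in s..T, φ t := by
  have hint : Integrable φ := hφ.integrable_of_hasCompactSupport hcs
  rw [intervalIntegral.integral_of_le hsT, ← Set.Ioc_union_Ioi_eq_Ioi hsT,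
    MeasureTheory.setIntegral_union (Set.Ioc_disjoint_Ioi le_rfl) measurableSet_Ioi
      hint.integrableOn hint.integrableOn,
    MeasureTheory.setIntegral_eq_zero_of_forall_eq_zero (f := φ) (t := Set.Ioi T)
      (fun t ht => hT t (le_of_lt ht)), add_zero]

lemma hcs_line {g : ℝ × ℝ → ℝ} (hcs : HasCompactSupport g) {u : ℝ × ℝ}
    (hu : (1:ℝ)/2 ≤ ‖u‖) (y : ℝ × ℝ) :
    HasCompactSupport (fun t : ℝ => g (y + t • u)) := by
  obtain ⟨R, hRpos, hR⟩ := exists_radius g hcs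
  refine HasCompactSupport.intro (isCompact_Icc (a := -(2*(R+‖y‖))) (b := 2*(R+‖y‖)))
    (fun t ht => ?_)
  have h1 : 2*(R+‖y‖) ≤ |t| := by
    by_contra hc
    push_neg at hc
    exact ht (Set.mem_Icc.2 (abs_le.mp (le_of_lt hc)))
  exact (hR _ (line_out hu R y t h1)).1


open Set in
lemma xbeam_shift {g : ℝ × ℝ → ℝ} (hg : Continuous g) (hcs : HasCompactSupport g)
    {u : ℝ × ℝ} (hu : (1:ℝ)/2 ≤ ‖u‖) (y : ℝ × ℝ) {T : ℝ}
    (hT : ∀ t, T ≤ t → g (y + t • u) = 0) {s : ℝ} (hs : s ≤ T) :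
    Xbeam u g (y + s • u) = ∫ t in s..T, g (y + t • u) := by
  have hl : Continuous (fun t : ℝ => g (y + t • u)) := cont_line hg u y
  have hlc : HasCompactSupport (fun t : ℝ => g (y + t • u)) := hcs_line hcs hu y
  have key : ∀ t : ℝ, g ((y + s • u) + t • u) = g (y + (t + s) • u) := by
    intro t; congr 1; rw [add_smul]; abel
  have step1 : Xbeam u g (y + s • u) = ∫ t in Set.Ioi (0:ℝ), g (y + (t + s) • u) := by
    unfold Xbeam
    exact MeasureTheory.setIntegral_congr_fun measurableSet_Ioi (fun t _ => key t)
  rw [step1]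
  have hφ : Continuous (fun t : ℝ => g (y + (t + s) • u)) :=
    hl.comp (continuous_id.add continuous_const)
  have hφc : HasCompactSupport (fun t : ℝ => g (y + (t + s) • u)) :=
    hlc.comp_homeomorph (Homeomorph.addRight s)
  rw [integral_Ioi_eq_intervalIntegral _ hφ hφc
      (T := T - s) (fun t ht => hT (t + s) (by linarith)) (by linarith)]
  have := intervalIntegral.integral_comp_add_right (a := 0) (b := T - s)
      (fun t => g (y + t • u)) s
  simpa using this

open Set in
lemma xmom_shift {g : ℝ × ℝ → ℝ} (hg : Continuous g) (hcs : HasCompactSupport g)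
    {u : ℝ × ℝ} (hu : (1:ℝ)/2 ≤ ‖u‖) (y : ℝ × ℝ) {T : ℝ}
    (hT : ∀ t, T ≤ t → g (y + t • u) = 0) {s : ℝ} (hs : s ≤ T) :
    Xmom u g (y + s • u) = ∫ t in s..T, (t - s) * g (y + t • u) := by
  have hl : Continuous (fun t : ℝ => g (y + t • u)) := cont_line hg u y
  have hlc : HasCompactSupport (fun t : ℝ => g (y + t • u)) := hcs_line hcs hu y
  have key : ∀ t : ℝ, t * g ((y + s • u) + t • u) = t * g (y + (t + s) • u) := by
    intro t; congr 2; rw [add_smul]; abel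
  have step1 : Xmom u g (y + s • u) = ∫ t in Set.Ioi (0:ℝ), t * g (y + (t + s) • u) := by
    unfold Xmom
    exact MeasureTheory.setIntegral_congr_fun measurableSet_Ioi (fun t _ => key t)
  rw [step1]
  have hφ : Continuous (fun t : ℝ => t * g (y + (t + s) • u)) :=
    continuous_id.mul (hl.comp (continuous_id.add continuous_const))
  have hφc : HasCompactSupport (fun t : ℝ => t * g (y + (t + s) • u)) := by
    have : HasCompactSupport (fun t : ℝ => g (y + (t + s) • u)) :=
      hlc.comp_homeomorph (Homeomorph.addRight s)
    exact HasCompactSupport.mul_left (f := fun t : ℝ => t) this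
  rw [integral_Ioi_eq_intervalIntegral _ hφ hφc
      (T := T - s) (fun t ht => by simp [hT (t + s) (by linarith)]) (by linarith)]
  have := intervalIntegral.integral_comp_add_right (a := 0) (b := T - s)
      (fun t => (t - s) * g (y + t • u)) s
  simp only [add_sub_cancel_right] at this
  simpa using this

lemma hasDerivAt_Xbeam_line {g : ℝ × ℝ → ℝ} (hg : Continuous g) (hcs : HasCompactSupport g)
    {u : ℝ × ℝ} (hu : (1:ℝ)/2 ≤ ‖u‖) (y : ℝ × ℝ) (s₀ : ℝ) :
    HasDerivAt (fun s => Xbeam u g (y + s • u)) (-(g (y + s₀ • u))) s₀ := by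
  obtain ⟨R, hRpos, hR⟩ := exists_radius g hcs
  set h : ℝ → ℝ := fun t => g (y + t • u) with hh
  have hl : Continuous h := cont_line hg u y
  have hlc : HasCompactSupport h := hcs_line hcs hu y
  set T : ℝ := 2*(R+‖y‖) + |s₀| + 1 with hTdef
  have hT : ∀ t, T ≤ t → h t = 0 := by
    intro t ht
    have h0 : (0:ℝ) ≤ T := by positivity
    exact (hR _ (line_out hu R y t (by rw [abs_of_nonneg (le_trans h0 ht)]; nlinarith [abs_nonneg s₀]))).1
  have hs₀T : s₀ < T := by nlinarith [le_abs_self s₀, norm_nonneg y]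
  have hd : HasDerivAt (fun s => ∫ t in s..T, h t) (-h s₀) s₀ :=
    intervalIntegral.integral_hasDerivAt_left
      ((hl.integrable_of_hasCompactSupport hlc).intervalIntegrable)
      (hl.stronglyMeasurableAtFilter _ _) hl.continuousAt
  exact hd.congr_of_eventuallyEq (Filter.eventuallyEq_of_mem (Iio_mem_nhds hs₀T)
    (fun s hs => xbeam_shift hg hcs hu y hT (le_of_lt hs)))

lemma hasDerivAt_Xmom_line {g : ℝ × ℝ → ℝ} (hg : Continuous g) (hcs : HasCompactSupport g)
    {u : ℝ × ℝ} (hu : (1:ℝ)/2 ≤ ‖u‖) (y : ℝ × ℝ) (s₀ : ℝ) :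
    HasDerivAt (fun s => Xmom u g (y + s • u)) (-(Xbeam u g (y + s₀ • u))) s₀ := by
  obtain ⟨R, hRpos, hR⟩ := exists_radius g hcs
  set h : ℝ → ℝ := fun t => g (y + t • u) with hh
  have hl : Continuous h := cont_line hg u y
  have hlc : HasCompactSupport h := hcs_line hcs hu y
  set T : ℝ := 2*(R+‖y‖) + |s₀| + 1 with hTdef
  have hT : ∀ t, T ≤ t → h t = 0 := by
    intro t ht
    have h0 : (0:ℝ) ≤ T := by positivity
    exact (hR _ (line_out hu R y t (by rw [abs_of_nonneg (le_trans h0 ht)]; nlinarith [abs_nonneg s₀]))).1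
  have hs₀T : s₀ < T := by nlinarith [le_abs_self s₀, norm_nonneg y]
  have hint : Integrable h := hl.integrable_of_hasCompactSupport hlc
  have hlm : Continuous (fun t : ℝ => t * h t) := continuous_id.mul hl
  have hlmc : HasCompactSupport (fun t : ℝ => t * h t) :=
    HasCompactSupport.mul_left (f := fun t : ℝ => t) hlc
  have hintm : Integrable (fun t : ℝ => t * h t) := hlm.integrable_of_hasCompactSupport hlmc
  -- G s = ∫ t in s..T, t * h t - s * ∫ t in s..T, h t
  have hd1 : HasDerivAt (fun s => ∫ t in s..T, t * h t) (-(s₀ * h s₀)) s₀ :=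
    intervalIntegral.integral_hasDerivAt_left hintm.intervalIntegrable
      (hlm.stronglyMeasurableAtFilter _ _) hlm.continuousAt
  have hd2 : HasDerivAt (fun s => ∫ t in s..T, h t) (-h s₀) s₀ :=
    intervalIntegral.integral_hasDerivAt_left hint.intervalIntegrable
      (hl.stronglyMeasurableAtFilter _ _) hl.continuousAt
  have hd3 : HasDerivAt (fun s : ℝ => s * ∫ t in s..T, h t)
      (1 * (∫ t in s₀..T, h t) + s₀ * (-h s₀)) s₀ := (hasDerivAt_id s₀).mul hd2
  have hG : HasDerivAt (fun s => (∫ t in s..T, t * h t) - s * ∫ t in s..T, h t)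
      (-(s₀ * h s₀) - (1 * (∫ t in s₀..T, h t) + s₀ * (-h s₀))) s₀ := hd1.sub hd3
  have hval : -(s₀ * h s₀) - (1 * (∫ t in s₀..T, h t) + s₀ * (-h s₀))
      = -(Xbeam u g (y + s₀ • u)) := by
    rw [xbeam_shift hg hcs hu y hT (le_of_lt hs₀T)]
    ring
  rw [hval] at hG
  refine hG.congr_of_eventuallyEq (Filter.eventuallyEq_of_mem (Iio_mem_nhds hs₀T)
    (fun s hs => ?_))
  rw [xmom_shift hg hcs hu y hT (le_of_lt hs)]
  have hsplit : ∀ t : ℝ, (t - s) * h t = t * h t - s * h t := fun t => by ring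
  rw [intervalIntegral.integral_congr (fun t _ => hsplit t),
    intervalIntegral.integral_sub hintm.intervalIntegrable
      ((hint.const_mul s).intervalIntegrable), intervalIntegral.integral_const_mul]


open Set Metric in
lemma xmom_differentiableAt {g : ℝ × ℝ → ℝ} (hg : ContDiff ℝ 1 g)
    (hcs : HasCompactSupport g) {u : ℝ × ℝ} (hu : (1:ℝ)/2 ≤ ‖u‖) (x₀ : ℝ × ℝ) :
    DifferentiableAt ℝ (Xmom u g) x₀ := by
  obtain ⟨R, hRpos, hR⟩ := exists_radius g hcs
  have hgc : Continuous g := hg.continuous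
  have hg' : Continuous (fderiv ℝ g) := hg.continuous_fderiv one_ne_zero
  obtain ⟨C, hC⟩ : ∃ C : ℝ, ∀ y, ‖fderiv ℝ g y‖ ≤ C := by
    rcases ((hcs.fderiv ℝ).exists_bound_of_continuous hg') with ⟨C, hC⟩
    exact ⟨C, hC⟩
  set T : ℝ := 2*(R + ‖x₀‖ + 1) with hTdef
  set F' : (ℝ × ℝ) → ℝ → ((ℝ × ℝ) →L[ℝ] ℝ) := fun x t => t • fderiv ℝ g (x + t • u) with hF'
  set bound : ℝ → ℝ := Set.indicator (Set.Icc 0 T) (fun t => C * t) with hbound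
  have hC0 : 0 ≤ C := le_trans (norm_nonneg _) (hC 0)
  have main : HasFDerivAt (fun x => ∫ t in Set.Ioi (0:ℝ), t * g (x + t • u))
      (∫ t in Set.Ioi (0:ℝ), F' x₀ t) x₀ := by
    apply hasFDerivAt_integral_of_dominated_of_fderiv_le (s := ball x₀ 1) (bound := bound) (ball_mem_nhds x₀ one_pos)
    · exact Filter.Eventually.of_forall fun x =>
        (continuous_id.mul (cont_line hgc u x)).aestronglyMeasurable
    · exact ((continuous_id.mul (cont_line hgc u x₀)).integrable_of_hasCompactSupport
        (HasCompactSupport.mul_left (f := fun t : ℝ => t) (hcs_line hcs hu x₀))).restrict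
    · exact (continuous_id.smul (hg'.comp
        (continuous_const.add (continuous_id.smul continuous_const)))).aestronglyMeasurable
    · rw [MeasureTheory.ae_restrict_iff' measurableSet_Ioi]
      refine Filter.Eventually.of_forall fun t ht x hx => ?_
      simp only [Set.mem_Ioi] at ht
      have hxn : ‖x‖ ≤ ‖x₀‖ + 1 := by
        have := mem_ball_iff_norm.mp hx
        calc ‖x‖ = ‖x₀ + (x - x₀)‖ := by ring_nf
        _ ≤ ‖x₀‖ + ‖x - x₀‖ := norm_add_le _ _
        _ ≤ ‖x₀‖ + 1 := by linarith
      by_cases hT : t ≤ T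
      · have : bound t = C * t := Set.indicator_of_mem (Set.mem_Icc.2 ⟨le_of_lt ht, hT⟩) _
        rw [this, hF']
        calc ‖t • fderiv ℝ g (x + t • u)‖ = |t| * ‖fderiv ℝ g (x + t • u)‖ := by
              rw [norm_smul, Real.norm_eq_abs]
        _ ≤ |t| * C := by
              exact mul_le_mul_of_nonneg_left (hC _) (abs_nonneg t)
        _ = C * t := by rw [abs_of_pos ht]; ring
      · push_neg at hT
        have hzero : fderiv ℝ g (x + t • u) = 0 := by
          refine (hR _ (line_out hu R x t ?_)).2
          rw [abs_of_pos ht]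
          nlinarith [norm_nonneg x₀]
        have : bound t = 0 := Set.indicator_of_notMem (by
          simp only [Set.mem_Icc, not_and_or]; right; linarith) _
        rw [this, hF']
        simp [hzero]
    · rw [hbound]
      refine (MeasureTheory.integrable_indicator_iff measurableSet_Icc).2 ?_ |>.restrict
      exact ((continuous_const.mul continuous_id).continuousOn).integrableOn_compact isCompact_Icc
    · rw [MeasureTheory.ae_restrict_iff' measurableSet_Ioi]
      refine Filter.Eventually.of_forall fun t ht x hx => ?_
      have h1 : HasFDerivAt (fun x : ℝ × ℝ => x + t • u) (ContinuousLinearMap.id ℝ (ℝ × ℝ)) x :=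
        (hasFDerivAt_id x).add_const _
      have h2 : HasFDerivAt (fun x : ℝ × ℝ => g (x + t • u)) (fderiv ℝ g (x + t • u)) x := by
        have := ((hg.differentiable one_ne_zero (x + t • u)).hasFDerivAt).comp x h1
        rwa [ContinuousLinearMap.comp_id] at this
      have h3 := h2.const_smul (R := ℝ) t
      rw [show (t • fun x : ℝ × ℝ => g (x + t • u)) = fun x => t * g (x + t • u) from rfl] at h3
      exact h3
  exact main.differentiableAt


lemma det2_ne_zero {u v : ℝ × ℝ} (hv : v.1 ^ 2 + v.2 ^ 2 = 1)
    (huv : LinearIndependent ℝ ![u, v]) : u.1 * v.2 - u.2 * v.1 ≠ 0 := by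
  obtain ⟨h1, h2⟩ := linearIndependent_fin2.mp huv
  simp only [Matrix.cons_val_one, Matrix.head_cons, Matrix.cons_val_zero] at h1 h2
  intro hd
  by_cases hv1 : v.1 = 0
  · have hv2 : v.2 ≠ 0 := by intro h; rw [hv1, h] at hv; norm_num at hv
    have hu1 : u.1 = 0 := by
      have : u.1 * v.2 = 0 := by rw [hv1] at hd; linarith
      rcases mul_eq_zero.mp this with h | h
      · exact h
      · exact absurd h hv2
    exact h2 (u.2 / v.2) (by
      apply Prod.ext <;> simp [smul_eq_mul, hv1, hu1, div_mul_cancel₀, hv2])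
  · exact h2 (u.1 / v.1) (by
      apply Prod.ext <;> simp only [Prod.smul_fst, Prod.smul_snd, smul_eq_mul]
      · exact div_mul_cancel₀ _ hv1
      · field_simp; linarith)

lemma xmom_vanish {g : ℝ × ℝ → ℝ} {u : ℝ × ℝ} (y : ℝ × ℝ)
    (hy : ∀ t : ℝ, 0 < t → g (y + t • u) = 0) : Xmom u g y = 0 := by
  unfold Xmom
  exact MeasureTheory.setIntegral_eq_zero_of_forall_eq_zero fun t ht => by
    rw [hy t ht, mul_zero]

lemma line_out_perp {u : ℝ × ℝ} (hu1 : |u.1| ≤ 1) (hu2 : |u.2| ≤ 1) {R : ℝ}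
    (y : ℝ × ℝ) (hd : 2 * R < |dot2 y (perp2 u)|) (t : ℝ) : R ≤ ‖y + t • u‖ := by
  have hperp : dot2 (y + t • u) (perp2 u) = dot2 y (perp2 u) := by
    simp only [dot2, perp2, Prod.fst_add, Prod.snd_add, Prod.smul_fst, Prod.smul_snd,
      smul_eq_mul]
    ring
  set z := y + t • u
  have h1 : |z.1| ≤ ‖z‖ := norm_fst_le z
  have h2 : |z.2| ≤ ‖z‖ := norm_snd_le z
  have hb : |dot2 z (perp2 u)| ≤ 2 * ‖z‖ := by
    simp only [dot2, perp2]
    calc |z.1 * -u.2 + z.2 * u.1| ≤ |z.1 * -u.2| + |z.2 * u.1| := abs_add_le _ _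
    _ = |z.1| * |u.2| + |z.2| * |u.1| := by rw [abs_mul, abs_mul, abs_neg]
    _ ≤ ‖z‖ * 1 + ‖z‖ * 1 := by
        gcongr <;> first | assumption | exact abs_nonneg _
    _ = 2 * ‖z‖ := by ring
  rw [hperp] at hb
  linarith

/-- `L f ≡ 0` and `I f ≡ 0` imply `f ≡ 0`. -/
theorem stmt10 (u v : ℝ × ℝ) (hu : u.1 ^ 2 + u.2 ^ 2 = 1) (hv : v.1 ^ 2 + v.2 ^ 2 = 1)
    (huv : LinearIndependent ℝ ![u, v])
    (f₁ f₂ : ℝ × ℝ → ℝ) (hf₁ : IsC2c f₁) (hf₂ : IsC2c f₂)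
    (hL : ∀ x, VlineL u v f₁ f₂ x = 0) (hI : ∀ x, VmomL u v f₁ f₂ x = 0) :
    ∀ x, f₁ x = 0 ∧ f₂ x = 0 := by
  intro x
  -- the dot products with u and v
  set gu : ℝ × ℝ → ℝ := fun y => f₁ y * u.1 + f₂ y * u.2 with hgu_def
  set gv : ℝ × ℝ → ℝ := fun y => f₁ y * v.1 + f₂ y * v.2 with hgv_def
  have hf₁1 : ContDiff ℝ 1 f₁ := hf₁.1.of_le one_le_two
  have hf₂1 : ContDiff ℝ 1 f₂ := hf₂.1.of_le one_le_two
  have hgu1 : ContDiff ℝ 1 gu := (hf₁1.mul contDiff_const).add (hf₂1.mul contDiff_const)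
  have hgv1 : ContDiff ℝ 1 gv := (hf₁1.mul contDiff_const).add (hf₂1.mul contDiff_const)
  have hguc : Continuous gu := hgu1.continuous
  have hgvc : Continuous gv := hgv1.continuous
  have hgucs : HasCompactSupport gu := (hf₁.2.mul_right).add (hf₂.2.mul_right)
  have hgvcs : HasCompactSupport gv := (hf₁.2.mul_right).add (hf₂.2.mul_right)
  have hu' : (1:ℝ)/2 ≤ ‖u‖ := unit_norm_half u hu
  have hv' : (1:ℝ)/2 ≤ ‖v‖ := unit_norm_half v hv
  have hd : u.1 * v.2 - u.2 * v.1 ≠ 0 := det2_ne_zero hv huv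
  -- hypotheses in beam form
  have hbeq : ∀ y, Xbeam v gv y = Xbeam u gu y := by
    intro y; have := hL y; unfold VlineL at this; rw [hgu_def, hgv_def]; linarith
  have hmeq : ∀ y, Xmom v gv y = Xmom u gu y := by
    intro y; have := hI y; unfold VmomL at this; rw [hgu_def, hgv_def]; linarith
  set A : ℝ × ℝ → ℝ := Xmom u gu with hA_def
  have hAeq : A = Xmom v gv := funext fun y => (hmeq y).symm
  have hAdiff : ∀ p, DifferentiableAt ℝ A p := fun p =>
    xmom_differentiableAt hgu1 hgucs hu' p
  have line_deriv : ∀ (w : ℝ × ℝ) (p : ℝ × ℝ) (t : ℝ),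
      HasDerivAt (fun s : ℝ => p + s • w) w t := by
    intro w p t
    have h1 : HasDerivAt (fun s : ℝ => s • w) w t := by
      simpa using (hasDerivAt_id t).smul_const w
    exact h1.const_add p
  -- fderiv of A in directions u and v
  have hAu : ∀ p, fderiv ℝ A p u = -(Xbeam u gu p) := by
    intro p
    have h1 : HasDerivAt (fun s : ℝ => A (p + s • u)) (-(Xbeam u gu p)) 0 := by
      have := hasDerivAt_Xmom_line hguc hgucs hu' p 0
      simpa using this
    have h2 : HasDerivAt (fun s : ℝ => A (p + s • u)) (fderiv ℝ A p u) 0 := by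
      have hp : p + (0:ℝ) • u = p := by simp
      have := HasFDerivAt.comp_hasDerivAt (0:ℝ)
        ((hAdiff (p + (0:ℝ) • u)).hasFDerivAt) (line_deriv u p 0)
      simp only [Function.comp_def, hp] at this
      exact this
    exact (h2.unique h1)
  have hAv : ∀ p, fderiv ℝ A p v = -(Xbeam u gu p) := by
    intro p
    have h1 : HasDerivAt (fun s : ℝ => A (p + s • v)) (-(Xbeam u gu p)) 0 := by
      have := hasDerivAt_Xmom_line hgvc hgvcs hv' p 0
      rw [← hAeq] at this
      simpa [hbeq p] using this
    have h2 : HasDerivAt (fun s : ℝ => A (p + s • v)) (fderiv ℝ A p v) 0 := by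
      have hp : p + (0:ℝ) • v = p := by simp
      have := HasFDerivAt.comp_hasDerivAt (0:ℝ)
        ((hAdiff (p + (0:ℝ) • v)).hasFDerivAt) (line_deriv v p 0)
      simp only [Function.comp_def, hp] at this
      exact this
    exact (h2.unique h1)
  -- A is identically zero
  have hA0 : ∀ y, A y = 0 := by
    intro y
    set φ : ℝ → ℝ := fun t => A (y + t • (u - v)) with hφ_def
    have hφd : ∀ t, HasDerivAt φ 0 t := by
      intro t
      set p := y + t • (u - v)
      have hchain : HasDerivAt φ (fderiv ℝ A p (u - v)) t := by
        have := HasFDerivAt.comp_hasDerivAt t (hAdiff p).hasFDerivAt (line_deriv (u - v) y t)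
        simpa [Function.comp_def] using this
      have : fderiv ℝ A p (u - v) = 0 := by
        rw [map_sub, hAu p, hAv p, sub_self]
      rwa [this] at hchain
    have hconst : ∀ s t : ℝ, φ s = φ t :=
      is_const_of_deriv_eq_zero (fun t => (hφd t).differentiableAt)
        (fun t => (hφd t).deriv)
    -- find a point on the line where A vanishes
    obtain ⟨R, hRpos, hR⟩ := exists_radius gu hgucs
    have hdet : dot2 v (perp2 u) = u.1 * v.2 - u.2 * v.1 := by
      simp only [dot2, perp2]; ring
    set tb : ℝ := (dot2 y (perp2 u) + 2 * R + 1) / (u.1 * v.2 - u.2 * v.1) with htb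
    have hdot : dot2 (y + tb • (u - v)) (perp2 u) = -(2 * R + 1) := by
      have huu : dot2 u (perp2 u) = 0 := by simp only [dot2, perp2]; ring
      have : dot2 (y + tb • (u - v)) (perp2 u)
          = dot2 y (perp2 u) + tb * (dot2 u (perp2 u) - dot2 v (perp2 u)) := by
        simp only [dot2, perp2, Prod.fst_add, Prod.snd_add, Prod.smul_fst, Prod.smul_snd,
          Prod.fst_sub, Prod.snd_sub, smul_eq_mul]
        ring
      rw [this, huu, hdet, htb, zero_sub]
      field_simp
      ring
  -- need |u.i| ≤ 1
    have hu1 : |u.1| ≤ 1 := by nlinarith [sq_abs u.1, sq_abs u.2, abs_nonneg u.1, abs_nonneg u.2, sq_nonneg u.2]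
    have hu2 : |u.2| ≤ 1 := by nlinarith [sq_abs u.1, sq_abs u.2, abs_nonneg u.1, abs_nonneg u.2, sq_nonneg u.1]
    have hvan : A (y + tb • (u - v)) = 0 := by
      apply xmom_vanish
      intro t ht
      refine (hR _ ?_).1
      apply line_out_perp hu1 hu2
      rw [hdot, abs_neg, abs_of_pos (by linarith)]
      linarith
    have := hconst 0 tb
    rw [hφ_def] at this
    simp only at this
    rw [show y + (0:ℝ) • (u - v) = y by simp] at this
    rw [this, hvan]
  -- Xbeam u gu ≡ 0
  have ha0 : ∀ y, Xbeam u gu y = 0 := by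
    intro y
    have h1 : HasDerivAt (fun s : ℝ => A (y + s • u)) (-(Xbeam u gu y)) 0 := by
      have := hasDerivAt_Xmom_line hguc hgucs hu' y 0
      simpa using this
    have h2 : HasDerivAt (fun s : ℝ => A (y + s • u)) 0 0 := by
      have : (fun s : ℝ => A (y + s • u)) = fun _ => (0:ℝ) := funext fun s => hA0 _
      rw [this]; exact hasDerivAt_const _ _
    have := h1.unique h2
    linarith
  have hb0 : ∀ y, Xbeam v gv y = 0 := fun y => (hbeq y).trans (ha0 y)
  -- gu ≡ 0 and gv ≡ 0
  have hgu0 : ∀ y, gu y = 0 := by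
    intro y
    have h1 : HasDerivAt (fun s : ℝ => Xbeam u gu (y + s • u)) (-(gu y)) 0 := by
      have := hasDerivAt_Xbeam_line hguc hgucs hu' y 0
      simpa using this
    have h2 : HasDerivAt (fun s : ℝ => Xbeam u gu (y + s • u)) 0 0 := by
      have : (fun s : ℝ => Xbeam u gu (y + s • u)) = fun _ => (0:ℝ) :=
        funext fun s => ha0 _
      rw [this]; exact hasDerivAt_const _ _
    have := h1.unique h2
    linarith
  have hgv0 : ∀ y, gv y = 0 := by
    intro y
    have h1 : HasDerivAt (fun s : ℝ => Xbeam v gv (y + s • v)) (-(gv y)) 0 := by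
      have := hasDerivAt_Xbeam_line hgvc hgvcs hv' y 0
      simpa using this
    have h2 : HasDerivAt (fun s : ℝ => Xbeam v gv (y + s • v)) 0 0 := by
      have : (fun s : ℝ => Xbeam v gv (y + s • v)) = fun _ => (0:ℝ) :=
        funext fun s => hb0 _
      rw [this]; exact hasDerivAt_const _ _
    have := h1.unique h2
    linarith
  -- conclude
  have e1 : f₁ x * u.1 + f₂ x * u.2 = 0 := hgu0 x
  have e2 : f₁ x * v.1 + f₂ x * v.2 = 0 := hgv0 x
  constructor
  · have h : f₁ x * (u.1 * v.2 - u.2 * v.1) = 0 := by linear_combination v.2 * e1 - u.2 * e2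
    exact (mul_eq_zero.mp h).resolve_right hd
  · have h : f₂ x * (u.1 * v.2 - u.2 * v.1) = 0 := by linear_combination u.1 * e2 - v.1 * e1
    exact (mul_eq_zero.mp h).resolve_right hd
end
end

section
/- Let u = (u₁,u₂), v = (v₁,v₂) be linearly independent unit vectors in ℝ² and let f = (f₁, f₂) be a vector field on ℝ² with f₁, f₂ ∈ C²_c(ℝ²). Then for every x ∈ ℝ², X_u f₂(x) - X_v f₂(x) = ∂(J f)/∂x₁ (x) - u₂ · X¹_u(div f)(x) + v₂ · X¹_v(div f)(x). -/
open MeasureTheory Matrix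

noncomputable section

section Helpers

open Set MeasureTheory

private lemma half_le_norm {u : ℝ × ℝ} (hu : u.1 ^ 2 + u.2 ^ 2 = 1) : (1:ℝ)/2 ≤ ‖u‖ := by
  have h1 : ‖u.1‖ ≤ ‖u‖ := norm_fst_le u
  have h2 : ‖u.2‖ ≤ ‖u‖ := norm_snd_le u
  have e1 : ‖u.1‖ = |u.1| := rfl
  have e2 : ‖u.2‖ = |u.2| := rfl
  nlinarith [norm_nonneg u, sq_abs u.1, sq_abs u.2, abs_nonneg u.1, abs_nonneg u.2]

/-- Support/vanishing lemma along a beam. -/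
private lemma beam_vanish {g : ℝ × ℝ → ℝ} (hg : HasCompactSupport g)
    {u : ℝ × ℝ} (hu : u.1 ^ 2 + u.2 ^ 2 = 1) (x₀ : ℝ × ℝ) :
    ∃ T : ℝ, 0 < T ∧ ∀ x : ℝ × ℝ, ‖x - x₀‖ ≤ 1 → ∀ t : ℝ, T ≤ |t| →
      g (x + t • u) = 0 ∧ fderiv ℝ g (x + t • u) = 0 := by
  obtain ⟨R, hR⟩ := hg.isBounded.subset_closedBall (0 : ℝ × ℝ)
  refine ⟨2 * (|R| + ‖x₀‖ + 2), by positivity, fun x hx t ht => ?_⟩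
  have hnotin : x + t • u ∉ tsupport g := by
    intro hmem
    have h1 : ‖x + t • u‖ ≤ R := by simpa using hR hmem
    have h2 : ‖t • u‖ ≤ ‖x + t • u‖ + ‖x‖ := by
      calc ‖t • u‖ = ‖(x + t • u) - x‖ := by rw [add_sub_cancel_left]
        _ ≤ ‖x + t • u‖ + ‖x‖ := norm_sub_le _ _
    have h3 : ‖t • u‖ = |t| * ‖u‖ := by rw [norm_smul, Real.norm_eq_abs]
    have h4 : ‖x‖ ≤ ‖x₀‖ + 1 := by
      have := norm_add_le (x - x₀) x₀
      simp only [sub_add_cancel] at this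
      linarith
    have h5 : (1:ℝ)/2 ≤ ‖u‖ := half_le_norm hu
    have h6 : |t| / 2 ≤ |t| * ‖u‖ := by nlinarith [abs_nonneg t]
    have hR' : R ≤ |R| := le_abs_self R
    linarith
  constructor
  · exact image_eq_zero_of_notMem_tsupport hnotin
  · by_contra h
    exact hnotin (support_fderiv_subset ℝ (by simpa [Function.mem_support] using h))

private lemma vanish_integrable {E : Type*} [NormedAddCommGroup E] {φ : ℝ → E}
    (hc : Continuous φ) {T : ℝ} (h : ∀ t, T ≤ |t| → φ t = 0) :
    Integrable φ := by
  apply hc.integrable_of_hasCompactSupport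
  apply HasCompactSupport.intro (isCompact_Icc (a := -T) (b := T))
  intro t htn
  apply h
  rcases not_and_or.1 (fun hh : -T ≤ t ∧ t ≤ T => htn ⟨hh.1, hh.2⟩) with h1 | h1
  · push_neg at h1; exact le_trans (by linarith) (neg_le_abs t)
  · push_neg at h1; exact le_trans (le_of_lt h1) (le_abs_self t)

private lemma cont_fderiv_comp {g : ℝ × ℝ → ℝ} (hg : ContDiff ℝ 2 g) :
    Continuous (fderiv ℝ g) :=
  hg.continuous_fderiv (by norm_num)

/-- Integration by parts: `∫₀^∞ (g(x+tu) + t ⬝ Dg(x+tu) u) dt = 0`. -/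
private lemma beam_ibp {g : ℝ × ℝ → ℝ} (hg : ContDiff ℝ 2 g) (hgc : HasCompactSupport g)
    {u : ℝ × ℝ} (hu : u.1 ^ 2 + u.2 ^ 2 = 1) (x : ℝ × ℝ) :
    ∫ t in Set.Ioi (0:ℝ), (g (x + t • u) + t * fderiv ℝ g (x + t • u) u) = 0 := by
  obtain ⟨T, hT, hv⟩ := beam_vanish hgc hu x
  set k : ℝ → ℝ := fun t => t * g (x + t • u) with hk
  have hderiv : ∀ t : ℝ, HasDerivAt k (g (x + t • u) + t * fderiv ℝ g (x + t • u) u) t := by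
    intro t
    have h1 : HasDerivAt (fun t : ℝ => x + t • u) u t := by
      simpa using ((hasDerivAt_id t).smul_const u).const_add x
    have h2 : HasDerivAt (fun t : ℝ => g (x + t • u)) (fderiv ℝ g (x + t • u) u) t :=
      (hg.differentiable (by norm_num) _).hasFDerivAt.comp_hasDerivAt t h1
    simpa [mul_comm] using (hasDerivAt_id t).fun_mul h2
  have hcont : Continuous fun t : ℝ => g (x + t • u) + t * fderiv ℝ g (x + t • u) u := by
    have hc0 : Continuous fun t : ℝ => x + t • u := by continuity
    exact ((hg.continuous.comp hc0)).add
      (continuous_id.mul (((cont_fderiv_comp hg).comp hc0).clm_apply continuous_const))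
  have hint : Integrable fun t : ℝ => g (x + t • u) + t * fderiv ℝ g (x + t • u) u := by
    apply vanish_integrable hcont (T := T)
    intro t ht
    rcases hv x (by simp) t ht with ⟨h1, h2⟩
    simp [h1, h2]
  have hsplit : Set.Ioc (0:ℝ) T ∪ Set.Ioi T = Set.Ioi 0 := Set.Ioc_union_Ioi_eq_Ioi hT.le
  have h0 : ∫ t in Set.Ioi T, (g (x + t • u) + t * fderiv ℝ g (x + t • u) u) = 0 := by
    apply setIntegral_eq_zero_of_forall_eq_zero
    intro t ht
    rcases hv x (by simp) t (le_trans (le_of_lt ht) (le_abs_self t)) with ⟨h1, h2⟩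
    simp [h1, h2]
  rw [← hsplit, setIntegral_union Set.Ioc_disjoint_Ioi_same measurableSet_Ioi
    hint.integrableOn hint.integrableOn, h0, add_zero]
  have hIoc : ∫ t in Set.Ioc (0:ℝ) T, (g (x + t • u) + t * fderiv ℝ g (x + t • u) u)
      = ∫ t in (0:ℝ)..T, (g (x + t • u) + t * fderiv ℝ g (x + t • u) u) := by
    rw [intervalIntegral.integral_of_le hT.le]
  rw [hIoc, intervalIntegral.integral_eq_sub_of_hasDerivAt (fun t _ => hderiv t)
    (hcont.intervalIntegrable 0 T)]
  have hgT : g (x + T • u) = 0 := (hv x (by simp) T (by rw [abs_of_pos hT])).1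
  simp [hk, hgT]

/-- Differentiation under the integral for the first moment transform. -/
private lemma xmom_hasFDerivAt {g : ℝ × ℝ → ℝ} (hg : ContDiff ℝ 2 g)
    (hgc : HasCompactSupport g) {u : ℝ × ℝ} (hu : u.1 ^ 2 + u.2 ^ 2 = 1) (x₀ : ℝ × ℝ) :
    HasFDerivAt (Xmom u g) (∫ t in Set.Ioi (0:ℝ), t • fderiv ℝ g (x₀ + t • u)) x₀ := by
  obtain ⟨T, hT, hv⟩ := beam_vanish hgc hu x₀
  obtain ⟨C, hC⟩ := (hgc.fderiv ℝ).exists_bound_of_continuous (cont_fderiv_comp hg)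
  have hC0 : 0 ≤ C := le_trans (norm_nonneg _) (hC 0)
  set bound : ℝ → ℝ := Set.indicator (Set.Icc 0 T) (fun _ => T * C) with hbd
  have key := hasFDerivAt_integral_of_dominated_of_fderiv_le
    (𝕜 := ℝ) (μ := volume.restrict (Set.Ioi (0:ℝ)))
    (F := fun x t => t * g (x + t • u))
    (F' := fun x t => t • fderiv ℝ g (x + t • u))
    (x₀ := x₀) (bound := bound) (s := Metric.ball x₀ 1) (Metric.ball_mem_nhds x₀ one_pos)
    ?_ ?_ ?_ ?_ ?_ ?_
  · exact key
  · filter_upwards with x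
    have : Continuous fun t : ℝ => t * g (x + t • u) := by
      have hc0 : Continuous fun t : ℝ => x + t • u := by continuity
      exact continuous_id.mul (hg.continuous.comp hc0)
    exact this.aestronglyMeasurable
  · have hc0 : Continuous fun t : ℝ => x₀ + t • u := by continuity
    have hcont : Continuous fun t : ℝ => t * g (x₀ + t • u) :=
      continuous_id.mul (hg.continuous.comp hc0)
    apply (vanish_integrable hcont (T := T) ?_).restrict
    intro t ht
    rw [(hv x₀ (by simp) t ht).1, mul_zero]
  · have hc0 : Continuous fun t : ℝ => x₀ + t • u := by continuity
    exact (continuous_id.smul ((cont_fderiv_comp hg).comp hc0)).aestronglyMeasurable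
  · rw [ae_restrict_iff' measurableSet_Ioi]
    filter_upwards with t ht x hx
    have hx' : ‖x - x₀‖ ≤ 1 := le_of_lt (by simpa [dist_eq_norm] using hx)
    by_cases hle : t ≤ T
    · have htI : t ∈ Set.Icc (0:ℝ) T := ⟨le_of_lt ht, hle⟩
      rw [hbd, Set.indicator_of_mem htI]
      calc ‖t • fderiv ℝ g (x + t • u)‖ = |t| * ‖fderiv ℝ g (x + t • u)‖ := by
            rw [norm_smul]; rfl
        _ ≤ T * C := by
            apply mul_le_mul ?_ (hC _) (norm_nonneg _) hT.le
            rw [abs_of_pos ht]; exact hle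
    · push_neg at hle
      have := (hv x hx' t (le_trans hle.le (le_abs_self t))).2
      rw [this, smul_zero]
      simp [hbd, Set.indicator_nonneg, mul_nonneg hT.le hC0]
  · rw [hbd]
    exact ((integrable_indicator_iff measurableSet_Icc).2
      (integrableOn_const measure_Icc_lt_top.ne)).restrict
  · filter_upwards with t x _
    have h1 : HasFDerivAt (fun y : ℝ × ℝ => y + t • u) (ContinuousLinearMap.id ℝ (ℝ × ℝ)) x := by
      simpa using (hasFDerivAt_id x).add_const (t • u)
    have h2 : HasFDerivAt (fun y : ℝ × ℝ => g (y + t • u))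
        (fderiv ℝ g (x + t • u)) x := by
      exact ((hg.differentiable (by norm_num) _).hasFDerivAt.comp x h1)
    exact h2.const_mul t

/-- Per-beam computation. -/
private lemma beam_formula {u : ℝ × ℝ} (hu : u.1 ^ 2 + u.2 ^ 2 = 1)
    {f₁ f₂ : ℝ × ℝ → ℝ} (hf₁ : IsC2c f₁) (hf₂ : IsC2c f₂) (x : ℝ × ℝ) :
    DifferentiableAt ℝ
      (Xmom u (fun y => f₁ y * (perp2 u).1 + f₂ y * (perp2 u).2)) x ∧
    fderiv ℝ (Xmom u (fun y => f₁ y * (perp2 u).1 + f₂ y * (perp2 u).2)) x (1, 0)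
      = - Xbeam u f₂ x - u.2 * Xmom u (divf f₁ f₂) x := by
  set g : ℝ × ℝ → ℝ := fun y => f₁ y * (perp2 u).1 + f₂ y * (perp2 u).2 with hgdef
  have hg : ContDiff ℝ 2 g := (hf₁.1.mul contDiff_const).add (hf₂.1.mul contDiff_const)
  have hgc : HasCompactSupport g :=
    ((hf₁.2.mul_right).add (hf₂.2.mul_right))
  have hF := xmom_hasFDerivAt hg hgc hu x
  refine ⟨hF.differentiableAt, ?_⟩
  rw [hF.fderiv]
  obtain ⟨T, hT, hv⟩ := beam_vanish hgc hu x
  have hc0 : Continuous fun t : ℝ => x + t • u := by continuity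
  have hcF' : Continuous fun t : ℝ => t • fderiv ℝ g (x + t • u) :=
    continuous_id.smul ((cont_fderiv_comp hg).comp hc0)
  have hintF' : Integrable (fun t : ℝ => t • fderiv ℝ g (x + t • u))
      (volume.restrict (Set.Ioi (0:ℝ))) := by
    apply (vanish_integrable hcF' (T := T) ?_).restrict
    intro t ht; rw [(hv x (by simp) t ht).2, smul_zero]
  rw [ContinuousLinearMap.integral_apply hintF' (1, 0)]
  -- pointwise identity
  have hd₁ : Differentiable ℝ f₁ := hf₁.1.differentiable (by norm_num)
  have hd₂ : Differentiable ℝ f₂ := hf₂.1.differentiable (by norm_num)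
  have hpt : ∀ y : ℝ × ℝ, fderiv ℝ g y (1, 0)
      = fderiv ℝ f₂ y u - u.2 * divf f₁ f₂ y := by
    intro y
    have e1 : fderiv ℝ g y = (perp2 u).1 • fderiv ℝ f₁ y + (perp2 u).2 • fderiv ℝ f₂ y := by
      rw [hgdef]
      have := fderiv_fun_add ((hd₁ y).mul_const (perp2 u).1) ((hd₂ y).mul_const (perp2 u).2)
        (𝕜 := ℝ)
      rw [this, fderiv_mul_const (hd₁ y), fderiv_mul_const (hd₂ y)]
    have e2 : fderiv ℝ f₂ y u = u.1 * fderiv ℝ f₂ y (1, 0) + u.2 * fderiv ℝ f₂ y (0, 1) := by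
      have hdec : u = u.1 • ((1:ℝ), (0:ℝ)) + u.2 • ((0:ℝ), (1:ℝ)) := by
        simp [Prod.ext_iff]
      have he : fderiv ℝ f₂ y u
          = fderiv ℝ f₂ y (u.1 • ((1:ℝ), (0:ℝ)) + u.2 • ((0:ℝ), (1:ℝ))) := by rw [← hdec]
      rw [he, map_add, ContinuousLinearMap.map_smul, ContinuousLinearMap.map_smul]; simp
    rw [e1, e2]
    simp only [ContinuousLinearMap.add_apply, ContinuousLinearMap.coe_smul',
      Pi.smul_apply, smul_eq_mul, divf, perp2]
    ring
  have hXi : ∀ t : ℝ, (t • fderiv ℝ g (x + t • u)) (1, 0)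
      = t * fderiv ℝ f₂ (x + t • u) u - u.2 * (t * divf f₁ f₂ (x + t • u)) := by
    intro t
    rw [ContinuousLinearMap.smul_apply, hpt]
    simp; ring
  rw [MeasureTheory.integral_congr_ae (Filter.Eventually.of_forall (fun t => hXi t))]
  -- split the integral
  have hcontA : Continuous fun t : ℝ => t * fderiv ℝ f₂ (x + t • u) u :=
    continuous_id.mul ((((hf₂.1.continuous_fderiv (by norm_num))).comp hc0).clm_apply
      continuous_const)
  have hcontD : Continuous (divf f₁ f₂) :=
    ((hf₁.1.continuous_fderiv (by norm_num)).clm_apply continuous_const).add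
      ((hf₂.1.continuous_fderiv (by norm_num)).clm_apply continuous_const)
  obtain ⟨T₂, hT₂, hv₂⟩ := beam_vanish hf₂.2 hu x
  obtain ⟨T₁, hT₁, hv₁⟩ := beam_vanish hf₁.2 hu x
  have hvD : ∀ t : ℝ, max T₁ T₂ ≤ |t| → divf f₁ f₂ (x + t • u) = 0 := by
    intro t ht
    have h1 := (hv₁ x (by simp) t (le_trans (le_max_left _ _) ht)).2
    have h2 := (hv₂ x (by simp) t (le_trans (le_max_right _ _) ht)).2
    simp [divf, h1, h2]
  have hintA : Integrable (fun t : ℝ => t * fderiv ℝ f₂ (x + t • u) u)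
      (volume.restrict (Set.Ioi (0:ℝ))) := by
    apply (vanish_integrable hcontA (T := T₂) ?_).restrict
    intro t ht; rw [(hv₂ x (by simp) t ht).2]; simp
  have hcD : Continuous fun t : ℝ => u.2 * (t * divf f₁ f₂ (x + t • u)) :=
    continuous_const.mul (continuous_id.mul (hcontD.comp hc0))
  have hintD : Integrable (fun t : ℝ => u.2 * (t * divf f₁ f₂ (x + t • u)))
      (volume.restrict (Set.Ioi (0:ℝ))) := by
    apply (vanish_integrable hcD (T := max T₁ T₂) ?_).restrict
    intro t ht; rw [hvD t ht]; ring
  rw [MeasureTheory.integral_sub hintA hintD, MeasureTheory.integral_const_mul]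
  -- use IBP for the first piece
  have hibp := beam_ibp hf₂.1 hf₂.2 hu x
  have hintf₂ : Integrable (fun t : ℝ => f₂ (x + t • u))
      (volume.restrict (Set.Ioi (0:ℝ))) := by
    apply (vanish_integrable (hf₂.1.continuous.comp hc0) (T := T₂) ?_).restrict
    intro t ht; exact (hv₂ x (by simp) t ht).1
  have hsum := MeasureTheory.integral_add hintf₂ hintA
  rw [show (fun t : ℝ => f₂ (x + t • u) + t * fderiv ℝ f₂ (x + t • u) u)
      = fun t : ℝ => (fun s : ℝ => f₂ (x + s • u)) t + (fun s : ℝ => s * fderiv ℝ f₂ (x + s • u) u) t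
      from rfl] at hibp
  rw [hsum] at hibp
  have : ∫ t in Set.Ioi (0:ℝ), t * fderiv ℝ f₂ (x + t • u) u = - Xbeam u f₂ x := by
    rw [Xbeam]; linarith
  rw [this, Xmom]

end Helpers

/-- `X_u f₂ - X_v f₂ = ∂(J f)/∂x₁ - u₂ X¹_u(div f) + v₂ X¹_v(div f)`. -/
theorem stmt11 (u v : ℝ × ℝ) (hu : u.1 ^ 2 + u.2 ^ 2 = 1) (hv : v.1 ^ 2 + v.2 ^ 2 = 1)
    (huv : LinearIndependent ℝ ![u, v])
    (f₁ f₂ : ℝ × ℝ → ℝ) (hf₁ : IsC2c f₁) (hf₂ : IsC2c f₂) (x : ℝ × ℝ) :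
    Xbeam u f₂ x - Xbeam v f₂ x
      = fderiv ℝ (VmomT u v f₁ f₂) x (1, 0)
        - u.2 * Xmom u (divf f₁ f₂) x + v.2 * Xmom v (divf f₁ f₂) x := by
  have hbu := beam_formula hu hf₁ hf₂ x
  have hbv := beam_formula hv hf₁ hf₂ x
  have hVT : VmomT u v f₁ f₂
      = fun y => - Xmom u (fun z => f₁ z * (perp2 u).1 + f₂ z * (perp2 u).2) y
        + Xmom v (fun z => f₁ z * (perp2 v).1 + f₂ z * (perp2 v).2) y := rfl
  have hdiff : fderiv ℝ (VmomT u v f₁ f₂) x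
      = - fderiv ℝ (Xmom u (fun z => f₁ z * (perp2 u).1 + f₂ z * (perp2 u).2)) x
        + fderiv ℝ (Xmom v (fun z => f₁ z * (perp2 v).1 + f₂ z * (perp2 v).2)) x := by
    rw [hVT, fderiv_fun_add (hbu.1.fun_neg) hbv.1, fderiv_fun_neg]
  rw [hdiff]
  simp only [ContinuousLinearMap.add_apply, ContinuousLinearMap.neg_apply]
  rw [hbu.2, hbv.2]
  ring
end
end

section
/- Let u, v be linearly independent unit vectors in ℝ² and let f = (f₁, f₂) be a vector field on ℝ² with f₁, f₂ ∈ C²_c(ℝ²). If T f(x) = 0 and J f(x) = 0 for all x ∈ ℝ², then f = 0 identically. That is, a compactly supported C² vector field is uniquely determined by its transverse V-line transform together with its first moment transverse V-line transform. -/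
open MeasureTheory Matrix

noncomputable section

section vvAux
open intervalIntegral


lemma line_hcs {h : ℝ × ℝ → ℝ} (hs : HasCompactSupport h) {w : ℝ × ℝ} (hw : w ≠ 0) (y : ℝ × ℝ) :
    HasCompactSupport (fun t : ℝ => h (y + t • w)) := by
  obtain ⟨R, hR⟩ := hs.isBounded.subset_closedBall 0
  have hw' : 0 < ‖w‖ := norm_pos_iff.mpr hw
  set M : ℝ := (max R 0 + ‖y‖) / ‖w‖ + 1 with hMdef
  apply HasCompactSupport.intro (isCompact_Icc (a := -M) (b := M))
  intro t ht
  have habs : M < |t| := by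
    by_contra hc
    exact ht (Set.mem_Icc.mpr (abs_le.mp (not_lt.mp hc)))
  have h2 : max R 0 + ‖y‖ < |t| * ‖w‖ := by
    have : ((max R 0 + ‖y‖) / ‖w‖) * ‖w‖ < |t| * ‖w‖ := by
      apply mul_lt_mul_of_pos_right _ hw'
      calc (max R 0 + ‖y‖) / ‖w‖ < M := by simp [hMdef]
        _ < |t| := habs
    rwa [div_mul_cancel₀ _ hw'.ne'] at this
  have h3 : R < ‖y + t • w‖ := by
    have := norm_sub_norm_le (t • w) (-y)
    simp only [norm_neg, sub_neg_eq_add, norm_smul, Real.norm_eq_abs] at this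
    have h4 : t • w + y = y + t • w := by abel
    rw [h4] at this
    calc R ≤ max R 0 := le_max_left _ _
      _ < |t| * ‖w‖ - ‖y‖ := by linarith
      _ ≤ ‖y + t • w‖ := this
  apply image_eq_zero_of_notMem_tsupport
  intro hmem
  have := hR hmem
  simp only [Metric.mem_closedBall, dist_zero_right] at this
  linarith

lemma integral_Ioi_shift (ψ : ℝ → ℝ) (s : ℝ) :
    ∫ t in Set.Ioi (0:ℝ), ψ (s + t) = ∫ t in Set.Ioi s, ψ t := by
  have h1 : MeasurePreserving (fun t : ℝ => s + t) volume volume :=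
    measurePreserving_add_left volume s
  have h2 : MeasurableEmbedding (fun t : ℝ => s + t) :=
    (MeasurableEquiv.addLeft s).measurableEmbedding
  have := h1.setIntegral_preimage_emb h2 ψ (Set.Ioi s)
  rw [← this]
  congr 1
  ext t
  simp

lemma hasDerivAt_tail {ψ : ℝ → ℝ} (hc : Continuous ψ) (hs : HasCompactSupport ψ) (s : ℝ) :
    HasDerivAt (fun a => ∫ t in Set.Ioi a, ψ t) (-ψ s) s := by
  obtain ⟨R, hR⟩ := hs.isBounded.subset_closedBall 0
  set M : ℝ := max (s + 1) (max R 0 + 1) with hMdef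
  have hint : Integrable ψ := hc.integrable_of_hasCompactSupport hs
  have key : ∀ a < M, (∫ t in Set.Ioi a, ψ t) = ∫ t in a..M, ψ t := by
    intro a ha
    rw [intervalIntegral.integral_of_le ha.le]
    have hun : Set.Ioc a M ∪ Set.Ioi M = Set.Ioi a := Set.Ioc_union_Ioi_eq_Ioi ha.le
    rw [← hun, setIntegral_union (Set.Ioc_disjoint_Ioi le_rfl) measurableSet_Ioi
      hint.integrableOn hint.integrableOn]
    have : (∫ t in Set.Ioi M, ψ t) = 0 := by
      apply setIntegral_eq_zero_of_forall_eq_zero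
      intro t htm
      apply image_eq_zero_of_notMem_tsupport
      intro hmem
      have := hR hmem
      simp only [Metric.mem_closedBall, dist_zero_right, Real.norm_eq_abs] at this
      have h1 : max R 0 + 1 ≤ M := le_max_right _ _
      have h2 : M < t := htm
      have : t ≤ max R 0 := le_trans (le_abs_self t) (le_max_of_le_left this)
      linarith
    rw [this, add_zero]
  have hd : HasDerivAt (fun a => ∫ t in a..M, ψ t) (-ψ s) s :=
    intervalIntegral.integral_hasDerivAt_left (hc.intervalIntegrable _ _)
      (hc.stronglyMeasurableAtFilter _ _) hc.continuousAt
  apply hd.congr_of_eventuallyEq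
  have hsM : s < M := lt_of_lt_of_le (by linarith) (le_max_left _ _)
  filter_upwards [Iio_mem_nhds hsM] with a ha
  exact (key a ha)

section beamAux
variable {h : ℝ × ℝ → ℝ} {w : ℝ × ℝ}


lemma Xbeam_shift (y : ℝ × ℝ) (s : ℝ) :
    Xbeam w h (y + s • w) = ∫ t in Set.Ioi s, h (y + t • w) := by
  have : ∀ t : ℝ, y + s • w + t • w = y + (s + t) • w := by
    intro t; rw [add_smul]; abel
  unfold Xbeam
  rw [show (fun t : ℝ => h (y + s • w + t • w)) = fun t => h (y + (s+t) • w) from funext fun t => by rw [this t]] 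
  exact integral_Ioi_shift (fun t => h (y + t • w)) s

lemma Xbeam_hasDerivAt (hc : Continuous h) (hs : HasCompactSupport h) (hw : w ≠ 0)
    (y : ℝ × ℝ) (s : ℝ) :
    HasDerivAt (fun t => Xbeam w h (y + t • w)) (-h (y + s • w)) s := by
  have := hasDerivAt_tail (hc.comp (by continuity : Continuous fun t : ℝ => y + t • w))
    (line_hcs hs hw y) s
  exact this.congr_of_eventuallyEq (Filter.Eventually.of_forall fun a => Xbeam_shift y a)

lemma Xmom_shift (hc : Continuous h) (hs : HasCompactSupport h) (hw : w ≠ 0) (y : ℝ × ℝ) (s : ℝ) :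
    Xmom w h (y + s • w) = (∫ t in Set.Ioi s, t * h (y + t • w))
      - s * ∫ t in Set.Ioi s, h (y + t • w) := by
  set φ : ℝ → ℝ := fun t => h (y + t • w) with hφ
  have hφc : Continuous φ := hc.comp (by continuity)
  have hφs : HasCompactSupport φ := line_hcs hs hw y
  have hφi : Integrable φ := hφc.integrable_of_hasCompactSupport hφs
  set ψ : ℝ → ℝ := fun t => t * φ t with hψ
  have hψc : Continuous ψ := continuous_id.mul hφc
  have hψs : HasCompactSupport ψ := hφs.mul_left
  have hψi : Integrable ψ := hψc.integrable_of_hasCompactSupport hψs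
  have e1 : (∫ t in Set.Ioi s, t * h (y + t • w)) = ∫ t in Set.Ioi (0:ℝ), ψ (s + t) :=
    (integral_Ioi_shift ψ s).symm
  have e2 : (∫ t in Set.Ioi s, h (y + t • w)) = ∫ t in Set.Ioi (0:ℝ), φ (s + t) :=
    (integral_Ioi_shift φ s).symm
  have hψi' : IntegrableOn (fun t => ψ (s + t)) (Set.Ioi (0:ℝ)) := by
    exact (hψi.comp_add_left s).integrableOn
  have hφi' : IntegrableOn (fun t => φ (s + t)) (Set.Ioi (0:ℝ)) := by
    exact (hφi.comp_add_left s).integrableOn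
  rw [e1, e2]
  unfold Xmom
  rw [show s * (∫ t in Set.Ioi (0:ℝ), φ (s + t)) = ∫ t in Set.Ioi (0:ℝ), s * φ (s + t) from
    (MeasureTheory.integral_const_mul s _).symm]
  rw [← integral_sub hψi' (by simpa using hφi'.const_mul s)]
  congr 1
  ext t
  simp only [hψ, hφ]
  have : y + s • w + t • w = y + (s + t) • w := by rw [add_smul]; abel
  rw [this]; ring

lemma Xmom_hasDerivAt (hc : Continuous h) (hs : HasCompactSupport h) (hw : w ≠ 0)
    (y : ℝ × ℝ) (s : ℝ) :
    HasDerivAt (fun t => Xmom w h (y + t • w)) (-(Xbeam w h (y + s • w))) s := by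
  set φ : ℝ → ℝ := fun t => h (y + t • w) with hφ
  have hφc : Continuous φ := hc.comp (by continuity)
  have hφs : HasCompactSupport φ := line_hcs hs hw y
  set ψ : ℝ → ℝ := fun t => t * φ t with hψ
  have hψc : Continuous ψ := continuous_id.mul hφc
  have hψs : HasCompactSupport ψ := hφs.mul_left
  set A : ℝ → ℝ := fun a => ∫ t in Set.Ioi a, ψ t with hA
  set B : ℝ → ℝ := fun a => ∫ t in Set.Ioi a, φ t with hB
  have hAd : HasDerivAt A (-ψ s) s := hasDerivAt_tail hψc hψs s
  have hBd : HasDerivAt B (-φ s) s := hasDerivAt_tail hφc hφs s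
  have hmain : HasDerivAt (fun a => A a - a * B a) (-(B s)) s := by
    have : HasDerivAt (fun a => A a - a * B a) (-ψ s - (1 * B s + s * -φ s)) s :=
      hAd.sub ((hasDerivAt_id s).mul hBd)
    convert this using 1
    simp only [hψ, hφ, id]
    ring
  have heq : (fun t => Xmom w h (y + t • w)) = fun a => A a - a * B a := by
    funext a
    rw [Xmom_shift hc hs hw y a]
  rw [heq, show (-(Xbeam w h (y + s • w))) = -(B s) by rw [Xbeam_shift y s]]
  exact hmain

end beamAux

lemma cont_curve2 {P : ℝ × ℝ → ℝ} (hP : Continuous P) (y : ℝ × ℝ) (u v : ℝ × ℝ) :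
    Continuous fun p : ℝ × ℝ => P (y + p.1 • u + p.2 • v) :=
  hP.comp (((continuous_const.add (continuous_fst.smul continuous_const))).add
    (continuous_snd.smul continuous_const))

lemma cont_curve1 {P : ℝ × ℝ → ℝ} (hP : Continuous P) (z : ℝ × ℝ) (w : ℝ × ℝ) :
    Continuous fun r : ℝ => P (z + r • w) :=
  hP.comp (continuous_const.add (continuous_id.smul continuous_const))

lemma rect_eq {u v : ℝ × ℝ} {P Q : ℝ × ℝ → ℝ} (hP : Continuous P) (hQ : Continuous Q)
    (y : ℝ × ℝ)
    (hid : ∀ (α β : ℝ),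
      (∫ s in (0:ℝ)..α, ∫ r in (0:ℝ)..β, P (y + s • u + r • v)) =
      ∫ s in (0:ℝ)..β, ∫ r in (0:ℝ)..α, Q (y + r • u + s • v)) :
    P y = Q y := by
  have key : ∀ c : ℝ, 0 < c → |P y - Q y| ≤ 2 * c := by
    intro c hc
    have hcP : ContinuousAt (fun p : ℝ × ℝ => P (y + p.1 • u + p.2 • v)) (0, 0) :=
      (cont_curve2 hP y u v).continuousAt
    have hcQ : ContinuousAt (fun p : ℝ × ℝ => Q (y + p.1 • u + p.2 • v)) (0, 0) :=
      (cont_curve2 hQ y u v).continuousAt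
    rw [Metric.continuousAt_iff] at hcP hcQ
    obtain ⟨δ₁, hδ₁, hP1⟩ := hcP c hc
    obtain ⟨δ₂, hδ₂, hQ1⟩ := hcQ c hc
    set ε : ℝ := min δ₁ δ₂ / 2 with hεdef
    have hε : 0 < ε := by positivity
    have hεδ : ε < min δ₁ δ₂ := by
      have : 0 < min δ₁ δ₂ := lt_min hδ₁ hδ₂
      rw [hεdef]; linarith
    have hmem : ∀ s r : ℝ, s ∈ Set.uIoc (0:ℝ) ε → r ∈ Set.uIoc (0:ℝ) ε →
        dist ((s, r) : ℝ × ℝ) ((0, 0) : ℝ × ℝ) < min δ₁ δ₂ := by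
      intro s r hs hr
      rw [Set.uIoc_of_le hε.le] at hs hr
      rw [Prod.dist_eq]
      apply max_lt
      · rw [Real.dist_eq, sub_zero, abs_of_pos hs.1]; exact lt_of_le_of_lt hs.2 hεδ
      · rw [Real.dist_eq, sub_zero, abs_of_pos hr.1]; exact lt_of_le_of_lt hr.2 hεδ
    -- pointwise bounds
    have hptP : ∀ s r : ℝ, s ∈ Set.uIoc (0:ℝ) ε → r ∈ Set.uIoc (0:ℝ) ε →
        ‖P (y + s • u + r • v) - P y‖ ≤ c := by
      intro s r hs hr
      have := hP1 (lt_of_lt_of_le (hmem s r hs hr) (min_le_left _ _))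
      simp only [Real.dist_eq] at this
      have h0 : y + (0:ℝ) • u + (0:ℝ) • v = y := by simp
      rw [Real.norm_eq_abs]
      calc |P (y + s • u + r • v) - P y| = |P (y + s • u + r • v) - P (y + (0:ℝ) • u + (0:ℝ) • v)| := by rw [h0]
        _ ≤ c := le_of_lt this
    have hptQ : ∀ s r : ℝ, s ∈ Set.uIoc (0:ℝ) ε → r ∈ Set.uIoc (0:ℝ) ε →
        ‖Q (y + s • u + r • v) - Q y‖ ≤ c := by
      intro s r hs hr
      have := hQ1 (lt_of_lt_of_le (hmem s r hs hr) (min_le_right _ _))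
      simp only [Real.dist_eq] at this
      have h0 : y + (0:ℝ) • u + (0:ℝ) • v = y := by simp
      rw [Real.norm_eq_abs]
      calc |Q (y + s • u + r • v) - Q y| = |Q (y + s • u + r • v) - Q (y + (0:ℝ) • u + (0:ℝ) • v)| := by rw [h0]
        _ ≤ c := le_of_lt this
    -- inner bounds
    have hlineP : ∀ s : ℝ, Continuous fun r : ℝ => P (y + s • u + r • v) :=
      fun s => cont_curve1 hP (y + s • u) v
    have hlineQ : ∀ s : ℝ, Continuous fun r : ℝ => Q (y + r • u + s • v) := by
      intro s
      have : Continuous fun r : ℝ => Q (y + s • v + r • u) := cont_curve1 hQ (y + s • v) u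
      convert this using 2 with r
      abel_nf
    have innerP : ∀ s ∈ Set.uIoc (0:ℝ) ε,
        ‖(∫ r in (0:ℝ)..ε, P (y + s • u + r • v)) - ε * P y‖ ≤ c * ε := by
      intro s hs
      have hconst : ε * P y = ∫ r in (0:ℝ)..ε, P y := by
        rw [intervalIntegral.integral_const]; simp [smul_eq_mul]
      rw [hconst, ← intervalIntegral.integral_sub ((hlineP s).intervalIntegrable _ _)
        (intervalIntegrable_const)]
      have := intervalIntegral.norm_integral_le_of_norm_le_const
        (C := c) (f := fun r => P (y + s • u + r • v) - P y) (a := (0:ℝ)) (b := ε)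
        (fun r hr => hptP s r hs hr)
      simpa [abs_of_pos hε] using this
    have innerQ : ∀ s ∈ Set.uIoc (0:ℝ) ε,
        ‖(∫ r in (0:ℝ)..ε, Q (y + r • u + s • v)) - ε * Q y‖ ≤ c * ε := by
      intro s hs
      have hconst : ε * Q y = ∫ r in (0:ℝ)..ε, Q y := by
        rw [intervalIntegral.integral_const]; simp [smul_eq_mul]
      rw [hconst, ← intervalIntegral.integral_sub ((hlineQ s).intervalIntegrable _ _)
        (intervalIntegrable_const)]
      have := intervalIntegral.norm_integral_le_of_norm_le_const
        (C := c) (f := fun r => Q (y + r • u + s • v) - Q y) (a := (0:ℝ)) (b := ε)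
        (fun r hr => hptQ r s hr hs)
      simpa [abs_of_pos hε] using this
    -- outer continuity
    have hΘP : Continuous fun s : ℝ => ∫ r in (0:ℝ)..ε, P (y + s • u + r • v) := by
      exact continuous_parametric_intervalIntegral_of_continuous'
        (f := fun s r => P (y + s • u + r • v)) (by exact cont_curve2 hP y u v) 0 ε
    have hΘQ : Continuous fun s : ℝ => ∫ r in (0:ℝ)..ε, Q (y + r • u + s • v) := by
      have h1 : Continuous fun p : ℝ × ℝ => Q (y + p.2 • u + p.1 • v) := by
        have := cont_curve2 hQ y u v
        exact this.comp (continuous_snd.prodMk continuous_fst)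
      exact continuous_parametric_intervalIntegral_of_continuous'
        (f := fun s r => Q (y + r • u + s • v)) (by exact h1) 0 ε
    -- outer bounds
    have outerP : ‖(∫ s in (0:ℝ)..ε, ∫ r in (0:ℝ)..ε, P (y + s • u + r • v)) - ε ^ 2 * P y‖
        ≤ c * ε ^ 2 := by
      have hconst : ε ^ 2 * P y = ∫ s in (0:ℝ)..ε, ε * P y := by
        rw [intervalIntegral.integral_const]; simp [smul_eq_mul]; ring
      rw [hconst, ← intervalIntegral.integral_sub (hΘP.intervalIntegrable _ _)
        (intervalIntegrable_const)]
      have := intervalIntegral.norm_integral_le_of_norm_le_const (C := c * ε)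
        (f := fun s => (∫ r in (0:ℝ)..ε, P (y + s • u + r • v)) - ε * P y) (a := (0:ℝ)) (b := ε)
        innerP
      calc ‖∫ s in (0:ℝ)..ε, ((∫ r in (0:ℝ)..ε, P (y + s • u + r • v)) - ε * P y)‖
          ≤ c * ε * |ε - 0| := this
        _ = c * ε ^ 2 := by rw [sub_zero, abs_of_pos hε]; ring
    have outerQ : ‖(∫ s in (0:ℝ)..ε, ∫ r in (0:ℝ)..ε, Q (y + r • u + s • v)) - ε ^ 2 * Q y‖
        ≤ c * ε ^ 2 := by
      have hconst : ε ^ 2 * Q y = ∫ s in (0:ℝ)..ε, ε * Q y := by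
        rw [intervalIntegral.integral_const]; simp [smul_eq_mul]; ring
      rw [hconst, ← intervalIntegral.integral_sub (hΘQ.intervalIntegrable _ _)
        (intervalIntegrable_const)]
      have := intervalIntegral.norm_integral_le_of_norm_le_const (C := c * ε)
        (f := fun s => (∫ r in (0:ℝ)..ε, Q (y + r • u + s • v)) - ε * Q y) (a := (0:ℝ)) (b := ε)
        innerQ
      calc ‖∫ s in (0:ℝ)..ε, ((∫ r in (0:ℝ)..ε, Q (y + r • u + s • v)) - ε * Q y)‖
          ≤ c * ε * |ε - 0| := this
        _ = c * ε ^ 2 := by rw [sub_zero, abs_of_pos hε]; ring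
    -- combine
    have h9 : |P y - Q y| * ε ^ 2 ≤ (2 * c) * ε ^ 2 := by
      set LQ := ∫ s in (0:ℝ)..ε, ∫ r in (0:ℝ)..ε, Q (y + r • u + s • v) with hLQdef
      have t1 : ‖LQ - ε ^ 2 * P y‖ ≤ c * ε ^ 2 := by rw [hLQdef, ← hid ε ε]; exact outerP
      have t2 : ‖LQ - ε ^ 2 * Q y‖ ≤ c * ε ^ 2 := outerQ
      calc |P y - Q y| * ε ^ 2 = ‖-(LQ - ε ^ 2 * P y) + (LQ - ε ^ 2 * Q y)‖ := by
            rw [Real.norm_eq_abs,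
              show -(LQ - ε ^ 2 * P y) + (LQ - ε ^ 2 * Q y) = ε ^ 2 * (P y - Q y) by ring,
              abs_mul, abs_of_pos (by positivity : (0:ℝ) < ε ^ 2)]
            ring
        _ ≤ ‖-(LQ - ε ^ 2 * P y)‖ + ‖LQ - ε ^ 2 * Q y‖ := norm_add_le _ _
        _ = ‖LQ - ε ^ 2 * P y‖ + ‖LQ - ε ^ 2 * Q y‖ := by rw [norm_neg]
        _ ≤ c * ε ^ 2 + c * ε ^ 2 := add_le_add t1 t2
        _ = (2 * c) * ε ^ 2 := by ring
    exact le_of_mul_le_mul_right h9 (by positivity)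
  by_contra hne
  have hpos : 0 < |P y - Q y| := abs_pos.mpr (sub_ne_zero.mpr hne)
  have := key (|P y - Q y| / 4) (by positivity)
  linarith

lemma mixed_partials {u v : ℝ × ℝ} {Φ p q pv qu : ℝ × ℝ → ℝ}
    (h1 : ∀ (z : ℝ × ℝ) (s : ℝ), HasDerivAt (fun t => Φ (z + t • u)) (p (z + s • u)) s)
    (h2 : ∀ (z : ℝ × ℝ) (s : ℝ), HasDerivAt (fun t => Φ (z + t • v)) (q (z + s • v)) s)
    (h3 : ∀ (z : ℝ × ℝ) (s : ℝ), HasDerivAt (fun t => p (z + t • v)) (pv (z + s • v)) s)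
    (h4 : ∀ (z : ℝ × ℝ) (s : ℝ), HasDerivAt (fun t => q (z + t • u)) (qu (z + s • u)) s)
    (hpc : ∀ z : ℝ × ℝ, Continuous fun s : ℝ => p (z + s • u))
    (hqc : ∀ z : ℝ × ℝ, Continuous fun s : ℝ => q (z + s • v))
    (hpv : Continuous pv) (hqu : Continuous qu) :
    ∀ y, pv y = qu y := by
  have ftcΦu : ∀ (z : ℝ × ℝ) (α : ℝ), Φ (z + α • u) - Φ z = ∫ s in (0:ℝ)..α, p (z + s • u) := by
    intro z α
    have h := intervalIntegral.integral_eq_sub_of_hasDerivAt (f := fun t => Φ (z + t • u))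
      (f' := fun s => p (z + s • u)) (a := 0) (b := α)
      (fun t _ => h1 z t) ((hpc z).intervalIntegrable _ _)
    rw [h]; simp
  have ftcΦv : ∀ (z : ℝ × ℝ) (β : ℝ), Φ (z + β • v) - Φ z = ∫ s in (0:ℝ)..β, q (z + s • v) := by
    intro z β
    have h := intervalIntegral.integral_eq_sub_of_hasDerivAt (f := fun t => Φ (z + t • v))
      (f' := fun s => q (z + s • v)) (a := 0) (b := β)
      (fun t _ => h2 z t) ((hqc z).intervalIntegrable _ _)
    rw [h]; simp
  have ftcp : ∀ (z : ℝ × ℝ) (β : ℝ), p (z + β • v) - p z = ∫ r in (0:ℝ)..β, pv (z + r • v) := by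
    intro z β
    have h := intervalIntegral.integral_eq_sub_of_hasDerivAt (f := fun t => p (z + t • v))
      (f' := fun r => pv (z + r • v)) (a := 0) (b := β)
      (fun t _ => h3 z t) ((cont_curve1 hpv z v).intervalIntegrable _ _)
    rw [h]; simp
  have ftcq : ∀ (z : ℝ × ℝ) (α : ℝ), q (z + α • u) - q z = ∫ r in (0:ℝ)..α, qu (z + r • u) := by
    intro z α
    have h := intervalIntegral.integral_eq_sub_of_hasDerivAt (f := fun t => q (z + t • u))
      (f' := fun r => qu (z + r • u)) (a := 0) (b := α)
      (fun t _ => h4 z t) ((cont_curve1 hqu z u).intervalIntegrable _ _)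
    rw [h]; simp
  intro y
  apply rect_eq hpv hqu y
  intro α β
  -- staircase identity
  have A1 := ftcΦu y α
  have A2 := ftcΦv (y + α • u) β
  have A3 := ftcΦv y β
  have A4 := ftcΦu (y + β • v) α
  have hcomm : y + β • v + α • u = y + α • u + β • v := by abel
  rw [hcomm] at A4
  have E : (∫ s in (0:ℝ)..α, p (y + s • u)) + (∫ s in (0:ℝ)..β, q (y + α • u + s • v))
      = (∫ s in (0:ℝ)..β, q (y + s • v)) + ∫ s in (0:ℝ)..α, p (y + β • v + s • u) := by
    linarith
  have E2 : (∫ s in (0:ℝ)..α, (p (y + β • v + s • u) - p (y + s • u)))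
      = ∫ s in (0:ℝ)..β, (q (y + α • u + s • v) - q (y + s • v)) := by
    rw [intervalIntegral.integral_sub ((hpc (y + β • v)).intervalIntegrable _ _)
      ((hpc y).intervalIntegrable _ _),
      intervalIntegral.integral_sub ((hqc (y + α • u)).intervalIntegrable _ _)
      ((hqc y).intervalIntegrable _ _)]
    linarith
  calc (∫ s in (0:ℝ)..α, ∫ r in (0:ℝ)..β, pv (y + s • u + r • v))
      = ∫ s in (0:ℝ)..α, (p (y + β • v + s • u) - p (y + s • u)) := by
        apply intervalIntegral.integral_congr
        intro s _
        show (∫ r in (0:ℝ)..β, pv (y + s • u + r • v))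
          = p (y + β • v + s • u) - p (y + s • u)
        have hc2 : y + β • v + s • u = (y + s • u) + β • v := by abel
        rw [hc2, ftcp (y + s • u) β]
    _ = ∫ s in (0:ℝ)..β, (q (y + α • u + s • v) - q (y + s • v)) := E2
    _ = ∫ s in (0:ℝ)..β, ∫ r in (0:ℝ)..α, qu (y + r • u + s • v) := by
        apply intervalIntegral.integral_congr
        intro s _
        show q (y + α • u + s • v) - q (y + s • v)
          = ∫ r in (0:ℝ)..α, qu (y + r • u + s • v)
        have hc2 : y + α • u + s • v = (y + s • v) + α • u := by abel
        rw [hc2, ftcq (y + s • v) α]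
        apply intervalIntegral.integral_congr
        intro r _
        show qu (y + s • v + r • u) = qu (y + r • u + s • v)
        have : y + s • v + r • u = y + r • u + s • v := by abel
        rw [this]

def gperp (w : ℝ × ℝ) (f₁ f₂ : ℝ × ℝ → ℝ) : ℝ × ℝ → ℝ :=
  fun y => f₁ y * (perp2 w).1 + f₂ y * (perp2 w).2

lemma gperp_contDiff {f₁ f₂ : ℝ × ℝ → ℝ} (w : ℝ × ℝ) (h1 : ContDiff ℝ 2 f₁) (h2 : ContDiff ℝ 2 f₂) :
    ContDiff ℝ 2 (gperp w f₁ f₂) :=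
  (h1.mul contDiff_const).add (h2.mul contDiff_const)

lemma gperp_hcs {f₁ f₂ : ℝ × ℝ → ℝ} (w : ℝ × ℝ) (h1 : HasCompactSupport f₁) (h2 : HasCompactSupport f₂) :
    HasCompactSupport (gperp w f₁ f₂) :=
  (h1.mul_right).add (h2.mul_right)

lemma fderiv_apply_cont {g : ℝ × ℝ → ℝ} (hg : ContDiff ℝ 2 g) (w : ℝ × ℝ) :
    Continuous fun z => fderiv ℝ g z w :=
  (hg.continuous_fderiv (by norm_num)).clm_apply continuous_const

lemma hasDerivAt_line {g : ℝ × ℝ → ℝ} (hg : Differentiable ℝ g) (z w : ℝ × ℝ) (s : ℝ) :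
    HasDerivAt (fun t => g (z + t • w)) (fderiv ℝ g (z + s • w) w) s := by
  have hcurve : HasDerivAt (fun t : ℝ => z + t • w) w s := by
    simpa using ((hasDerivAt_id s).smul_const w).const_add z
  exact (hg (z + s • w)).hasFDerivAt.comp_hasDerivAt s hcurve

-- linear algebra facts
lemma det_ne_zero {u v : ℝ × ℝ} (hu : u.1 ^ 2 + u.2 ^ 2 = 1)
    (huv : LinearIndependent ℝ ![u, v]) : u.1 * v.2 - u.2 * v.1 ≠ 0 := by
  intro hd
  have hli := Fintype.linearIndependent_iff.mp huv
  have e1 := hli ![v.2, -u.2] (by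
    show v.2 • u + ((-u.2) • v + 0) = 0
    have : v.2 • u + ((-u.2) • v + 0) = (v.2 * u.1 - u.2 * v.1, v.2 * u.2 - u.2 * v.2) := by
      simp [Prod.ext_iff, smul_eq_mul]; constructor <;> ring
    rw [this, Prod.ext_iff]
    constructor <;> simp <;> nlinarith)
  have e2 := hli ![v.1, -u.1] (by
    show v.1 • u + ((-u.1) • v + 0) = 0
    have : v.1 • u + ((-u.1) • v + 0) = (v.1 * u.1 - u.1 * v.1, v.1 * u.2 - u.1 * v.2) := by
      simp [Prod.ext_iff, smul_eq_mul]; constructor <;> ring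
    rw [this, Prod.ext_iff]
    constructor <;> simp <;> nlinarith)
  have h1 := e1 0; have h2 := e1 1; have h3 := e2 0; have h4 := e2 1
  simp at h1 h2 h3 h4
  rw [h2, h4] at hu
  norm_num at hu

lemma sub_ne_zero_of_li {u v : ℝ × ℝ} (huv : LinearIndependent ℝ ![u, v]) : u - v ≠ 0 := by
  intro hd
  have hli := Fintype.linearIndependent_iff.mp huv
  have := hli ![1, -1] (by
    show (1:ℝ) • u + ((-1:ℝ) • v + 0) = 0
    simp [sub_eq_zero.mp hd])
  simpa using this 0

lemma cont_of_hasDerivAt {f f' : ℝ → ℝ} (h : ∀ s, HasDerivAt f (f' s) s) : Continuous f := by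
  rw [continuous_iff_continuousAt]; exact fun s => (h s).continuousAt

end vvAux

/-- `T f ≡ 0` and `J f ≡ 0` imply `f ≡ 0`. -/
theorem stmt13 (u v : ℝ × ℝ) (hu : u.1 ^ 2 + u.2 ^ 2 = 1) (hv : v.1 ^ 2 + v.2 ^ 2 = 1)
    (huv : LinearIndependent ℝ ![u, v])
    (f₁ f₂ : ℝ × ℝ → ℝ) (hf₁ : IsC2c f₁) (hf₂ : IsC2c f₂)
    (hT : ∀ x, VlineT u v f₁ f₂ x = 0) (hJ : ∀ x, VmomT u v f₁ f₂ x = 0) :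
    ∀ x, f₁ x = 0 ∧ f₂ x = 0 := by
  obtain ⟨hf₁2, hf₁s⟩ := hf₁
  obtain ⟨hf₂2, hf₂s⟩ := hf₂
  have hu0 : u ≠ 0 := by
    intro h; rw [h] at hu; simp at hu
  have hv0 : v ≠ 0 := by
    intro h; rw [h] at hv; simp at hv
  have huv0 : u - v ≠ 0 := sub_ne_zero_of_li huv
  set g₁ : ℝ × ℝ → ℝ := gperp u f₁ f₂ with hg₁def
  set g₂ : ℝ × ℝ → ℝ := gperp v f₁ f₂ with hg₂def
  have hg₁2 : ContDiff ℝ 2 g₁ := gperp_contDiff u hf₁2 hf₂2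
  have hg₂2 : ContDiff ℝ 2 g₂ := gperp_contDiff v hf₁2 hf₂2
  have hg₁s : HasCompactSupport g₁ := gperp_hcs u hf₁s hf₂s
  have hg₂s : HasCompactSupport g₂ := gperp_hcs v hf₁s hf₂s
  have hg₁c : Continuous g₁ := hg₁2.continuous
  have hg₂c : Continuous g₂ := hg₂2.continuous
  have hg₁d : Differentiable ℝ g₁ := hg₁2.differentiable (by norm_num)
  have hg₂d : Differentiable ℝ g₂ := hg₂2.differentiable (by norm_num)
  have hT' : ∀ x, Xbeam v g₂ x = Xbeam u g₁ x := by
    intro x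
    have h := hT x
    unfold VlineT at h
    rw [hg₁def, hg₂def]
    unfold gperp
    linarith
  have hJ' : ∀ x, Xmom v g₂ x = Xmom u g₁ x := by
    intro x
    have h := hJ x
    unfold VmomT at h
    rw [hg₁def, hg₂def]
    unfold gperp
    linarith
  -- Application 1: from the moment transform, g₂ = g₁
  have app1 : ∀ y, g₂ y = g₁ y := by
    apply mixed_partials (u := u) (v := v) (Φ := fun z => Xmom u g₁ z)
      (p := fun z => -(Xbeam u g₁ z)) (q := fun z => -(Xbeam u g₁ z))
      (pv := g₂) (qu := g₁)
    · intro z s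
      exact Xmom_hasDerivAt hg₁c hg₁s hu0 z s
    · intro z s
      have h := Xmom_hasDerivAt hg₂c hg₂s hv0 z s
      have e1 : (fun t : ℝ => Xmom v g₂ (z + t • v)) = fun t : ℝ => Xmom u g₁ (z + t • v) :=
        funext fun t => hJ' _
      rw [e1, hT' (z + s • v)] at h
      exact h
    · intro z s
      have h : HasDerivAt (fun t => -(Xbeam v g₂ (z + t • v))) (- -g₂ (z + s • v)) s :=
        (Xbeam_hasDerivAt hg₂c hg₂s hv0 z s).neg
      have e1 : (fun t : ℝ => -(Xbeam v g₂ (z + t • v))) = fun t : ℝ => -(Xbeam u g₁ (z + t • v)) :=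
        funext fun t => by rw [hT' _]
      rw [e1] at h
      simp only [neg_neg] at h
      exact h
    · intro z s
      have h := (Xbeam_hasDerivAt hg₁c hg₁s hu0 z s).neg
      simp only [neg_neg] at h
      exact h
    · intro z
      have : ∀ s : ℝ, HasDerivAt (fun t => -(Xbeam u g₁ (z + t • u))) (g₁ (z + s • u)) s := by
        intro s
        have h := (Xbeam_hasDerivAt hg₁c hg₁s hu0 z s).neg
        simp only [neg_neg] at h; exact h
      exact cont_of_hasDerivAt this
    · intro z
      have : ∀ s : ℝ, HasDerivAt (fun t => -(Xbeam u g₁ (z + t • v))) (g₂ (z + s • v)) s := by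
        intro s
        have h : HasDerivAt (fun t => -(Xbeam v g₂ (z + t • v))) (- -g₂ (z + s • v)) s :=
          (Xbeam_hasDerivAt hg₂c hg₂s hv0 z s).neg
        have e1 : (fun t : ℝ => -(Xbeam v g₂ (z + t • v))) = fun t : ℝ => -(Xbeam u g₁ (z + t • v)) :=
          funext fun t => by rw [hT' _]
        rw [e1] at h
        simp only [neg_neg] at h
        exact h
      exact cont_of_hasDerivAt this
    · exact hg₂c
    · exact hg₁c
  -- Application 2: mixed partials of the beam transform
  have app2 : ∀ y, -(fderiv ℝ g₁ y v) = -(fderiv ℝ g₂ y u) := by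
    apply mixed_partials (u := u) (v := v) (Φ := fun z => Xbeam u g₁ z)
      (p := fun z => -(g₁ z)) (q := fun z => -(g₂ z))
      (pv := fun z => -(fderiv ℝ g₁ z v)) (qu := fun z => -(fderiv ℝ g₂ z u))
    · intro z s
      exact Xbeam_hasDerivAt hg₁c hg₁s hu0 z s
    · intro z s
      have h := Xbeam_hasDerivAt hg₂c hg₂s hv0 z s
      have e1 : (fun t : ℝ => Xbeam v g₂ (z + t • v)) = fun t : ℝ => Xbeam u g₁ (z + t • v) :=
        funext fun t => hT' _
      rw [e1] at h
      exact h
    · intro z s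
      exact (hasDerivAt_line hg₁d z v s).neg
    · intro z s
      exact (hasDerivAt_line hg₂d z u s).neg
    · intro z
      exact (cont_curve1 hg₁c z u).neg
    · intro z
      exact (cont_curve1 hg₂c z v).neg
    · exact (fderiv_apply_cont hg₁2 v).neg
    · exact (fderiv_apply_cont hg₂2 u).neg
  -- hence the directional derivative of g₁ along u - v vanishes
  have hdir : ∀ y, fderiv ℝ g₁ y (u - v) = 0 := by
    intro y
    have hfe : fderiv ℝ g₂ y u = fderiv ℝ g₁ y u := by
      have : g₂ = g₁ := funext app1
      rw [this]
    have h2 := app2 y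
    rw [neg_inj] at h2
    rw [(fderiv ℝ g₁ y).map_sub, h2, hfe, sub_self]
  -- so g₁ is constant along lines in direction u - v, hence vanishes
  have hg₁0 : ∀ y, g₁ y = 0 := by
    intro y
    set w : ℝ × ℝ := u - v with hwdef
    have hd : ∀ t : ℝ, HasDerivAt (fun t => g₁ (y + t • w)) 0 t := by
      intro t
      have := hasDerivAt_line hg₁d y w t
      rwa [hdir (y + t • w)] at this
    have hdiff : Differentiable ℝ fun t : ℝ => g₁ (y + t • w) :=
      fun t => (hd t).differentiableAt
    have hconst := is_const_of_deriv_eq_zero hdiff (fun t => (hd t).deriv)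
    obtain ⟨r, hr⟩ := (line_hcs hg₁s huv0 y).isBounded.subset_closedBall 0
    have hzero : (fun t : ℝ => g₁ (y + t • w)) (|r| + 1) = 0 := by
      refine image_eq_zero_of_notMem_tsupport (f := fun t : ℝ => g₁ (y + t • w)) ?_
      intro hmem
      have := hr hmem
      simp only [Metric.mem_closedBall, dist_zero_right, Real.norm_eq_abs] at this
      have h1 : |r| + 1 ≤ |(|r| + 1)| := le_abs_self _
      have h2 : r ≤ |r| := le_abs_self r
      linarith
    calc g₁ y = g₁ (y + (0:ℝ) • w) := by simp
      _ = g₁ (y + (|r| + 1) • w) := hconst 0 (|r| + 1)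
      _ = 0 := hzero
  have hg₂0 : ∀ y, g₂ y = 0 := fun y => (app1 y).trans (hg₁0 y)
  -- conclude
  intro x
  have e1 : f₁ x * (-u.2) + f₂ x * u.1 = 0 := hg₁0 x
  have e2 : f₁ x * (-v.2) + f₂ x * v.1 = 0 := hg₂0 x
  have hdet := det_ne_zero hu huv
  constructor
  · have h9 : (u.1 * v.2 - u.2 * v.1) * f₁ x = 0 := by linear_combination v.1 * e1 - u.1 * e2
    exact (mul_eq_zero.mp h9).resolve_left hdet
  · have h9 : (u.1 * v.2 - u.2 * v.1) * f₂ x = 0 := by linear_combination v.2 * e1 - u.2 * e2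
    exact (mul_eq_zero.mp h9).resolve_left hdet
end
end
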